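/- (Christoffel transformation for the P-family.) For every n ∈ ℕ and α ∈ ℕ: x·P_n^{(α+1)}(x) = P_{n+1}^{(α)}(x) + ω_{n+1}^{(α)}·P_n^{(α)}(x), where ω_{n+1}^{(α)} := H_n^{(α+1)}·(H_n^{(α)})^{−1}. -/

import Mathlib

open MeasureTheory Polynomial Matrix Filter

/-- Evaluation of a matrix polynomial at a real scalar. -/
noncomputable def mpEval {p : ℕ} (f : Polynomial (Matrix (Fin p) (Fin p) ℝ)) (x : ℝ) :
    Matrix (Fin p) (Fin p) ℝ :=
  f.sum fun k a => x ^ k • a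

/-- The adjacent matrix-valued θ-deformed bilinear form
`⟨f, g⟩_θ^α = ∫ f(x) · x^α · W(x) · g(x^θ)ᵀ dx`, computed entrywise. -/
noncomputable def bform {p : ℕ} (θ : ℕ) (W : ℝ → Matrix (Fin p) (Fin p) ℝ) (α : ℕ)
    (f g : Polynomial (Matrix (Fin p) (Fin p) ℝ)) : Matrix (Fin p) (Fin p) ℝ :=
  Matrix.of fun i j => ∫ x : ℝ, (mpEval f x * (x ^ α • W x) * (mpEval g (x ^ θ))ᵀ) i j

/-- A matrix polynomial is monic of degree `n`: the `x^n` coefficient is `I_p`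
and all higher coefficients vanish. -/
def MonicDeg {p : ℕ} (f : Polynomial (Matrix (Fin p) (Fin p) ℝ)) (n : ℕ) : Prop :=
  f.coeff n = 1 ∧ ∀ k : ℕ, n < k → f.coeff k = 0

/-- The k-th moment `m_k = ∫ x^k W(x) dx`, computed entrywise. -/
noncomputable def mom {p : ℕ} (W : ℝ → Matrix (Fin p) (Fin p) ℝ) (k : ℕ) :
    Matrix (Fin p) (Fin p) ℝ :=
  Matrix.of fun i j => ∫ x : ℝ, x ^ k * W x i j

/-- The block moment matrix `M_n^{(α)} = (m_{α+i+jθ})_{i,j=0}^{n-1}`, as an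
`n × n` matrix over the ring of `p × p` real matrices. -/
noncomputable def momMat {p : ℕ} (θ : ℕ) (W : ℝ → Matrix (Fin p) (Fin p) ℝ) (n α : ℕ) :
    Matrix (Fin n) (Fin n) (Matrix (Fin p) (Fin p) ℝ) :=
  Matrix.of fun i j => mom W (α + (i : ℕ) + (j : ℕ) * θ)

lemma mpEval_eq_sum {p : ℕ} (f : Polynomial (Matrix (Fin p) (Fin p) ℝ)) (x : ℝ) {N : ℕ}
    (hN : f.natDegree < N) :
    mpEval f x = ∑ k ∈ Finset.range N, x ^ k • f.coeff k := by
  unfold mpEval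
  exact f.sum_over_range' (fun n => smul_zero _) N hN

lemma mpEval_X_pow {p : ℕ} (i : ℕ) (x : ℝ) :
    mpEval (X ^ i : Polynomial (Matrix (Fin p) (Fin p) ℝ)) x = x ^ i • 1 := by
  rw [mpEval_eq_sum _ x (Nat.lt_succ_of_le (Polynomial.natDegree_X_pow_le i))]
  simp [Polynomial.coeff_X_pow, ite_smul]

lemma bform_Xpow {p : ℕ} (θ : ℕ) (W : ℝ → Matrix (Fin p) (Fin p) ℝ)
    (hWint : ∀ (k : ℕ) (i j : Fin p), Integrable fun x : ℝ => x ^ k * W x i j)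
    (α i : ℕ) (f : Polynomial (Matrix (Fin p) (Fin p) ℝ)) (N : ℕ) (hN : f.natDegree < N) :
    bform θ W α f (X ^ i) = ∑ k ∈ Finset.range N, f.coeff k * mom W (α + k + i * θ) := by
  have key : ∀ (x : ℝ) (a b : Fin p),
      ((mpEval f x * (x ^ α • W x) * (mpEval (X ^ i : Polynomial (Matrix (Fin p) (Fin p) ℝ)) (x ^ θ))ᵀ : Matrix (Fin p) (Fin p) ℝ) a b : ℝ)
        = ∑ k ∈ Finset.range N, ∑ c, (f.coeff k) a c * (x ^ (α + k + i * θ) * W x c b) := by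
    intro x a b
    rw [mpEval_X_pow, Matrix.transpose_smul, Matrix.transpose_one,
      mpEval_eq_sum f x hN, Finset.sum_mul, Finset.sum_mul, Matrix.sum_apply]
    refine Finset.sum_congr rfl fun k _ => ?_
    rw [smul_mul_assoc, smul_mul_assoc, mul_smul_comm, mul_smul_comm, mul_one,
      smul_smul, smul_smul, Matrix.smul_apply, smul_eq_mul, Matrix.mul_apply, Finset.mul_sum]
    refine Finset.sum_congr rfl fun c _ => ?_
    rw [show α + k + i * θ = k + θ * i + α by ring, pow_add, pow_add, pow_mul]
    ring
  ext a b
  simp only [bform, Matrix.of_apply]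
  simp_rw [key]
  rw [integral_finset_sum _ (fun k _ => integrable_finset_sum _
    (fun c _ => (hWint (α + k + i * θ) c b).const_mul _))]
  rw [Matrix.sum_apply]
  refine Finset.sum_congr rfl fun k _ => ?_
  rw [integral_finset_sum _ (fun c _ => (hWint (α + k + i * θ) c b).const_mul _),
    Matrix.mul_apply]
  refine Finset.sum_congr rfl fun c _ => ?_
  rw [integral_const_mul]
  rfl

lemma bform_X_mul {p : ℕ} (θ : ℕ) (W : ℝ → Matrix (Fin p) (Fin p) ℝ)
    (hWint : ∀ (k : ℕ) (i j : Fin p), Integrable fun x : ℝ => x ^ k * W x i j)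
    (α i : ℕ) (f : Polynomial (Matrix (Fin p) (Fin p) ℝ)) :
    bform θ W α (X * f) (X ^ i) = bform θ W (α + 1) f (X ^ i) := by
  have h1 : (X * f).natDegree < f.natDegree + 2 := by
    refine lt_of_le_of_lt (Polynomial.natDegree_mul_le.trans
      (Nat.add_le_add_right Polynomial.natDegree_X_le _)) ?_
    omega
  rw [bform_Xpow θ W hWint α i (X * f) (f.natDegree + 2) h1,
    bform_Xpow θ W hWint (α + 1) i f (f.natDegree + 1) (Nat.lt_succ_self _),
    Finset.sum_range_succ']
  simp only [Polynomial.coeff_X_mul, Polynomial.mul_coeff_zero, Polynomial.coeff_X_zero,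
    zero_mul, add_zero]
  refine Finset.sum_congr rfl fun k _ => ?_
  have h4 : α + (k + 1) + i * θ = α + 1 + k + i * θ := by omega
  rw [h4]

set_option maxHeartbeats 1000000 in
theorem statement7
    (p θ : ℕ) (hp : 1 ≤ p) (hθ : 1 ≤ θ)
    (W : ℝ → Matrix (Fin p) (Fin p) ℝ)
    (hWmeas : ∀ i j : Fin p, Measurable fun x : ℝ => W x i j)
    (hWint : ∀ (k : ℕ) (i j : Fin p), Integrable fun x : ℝ => x ^ k * W x i j)
    (hM : ∀ (n α : ℕ), 1 ≤ n → IsUnit (momMat θ W n α))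
    (P Q : ℕ → ℕ → Polynomial (Matrix (Fin p) (Fin p) ℝ))
    (hPmonic : ∀ n α : ℕ, MonicDeg (P n α) n)
    (hPorth : ∀ n α : ℕ, ∀ i < n, bform θ W α (P n α) (X ^ i) = 0)
    (hQmonic : ∀ n α : ℕ, MonicDeg (Q n α) n)
    (hQorth : ∀ n α : ℕ, ∀ i < n, bform θ W α (X ^ i) (Q n α) = 0)
    (H : ℕ → ℕ → Matrix (Fin p) (Fin p) ℝ)
    (hHdef : ∀ n α : ℕ, H n α = bform θ W α (P n α) (X ^ n))
    (hHunit : ∀ n α : ℕ, IsUnit (H n α)) :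
    ∀ n α : ℕ,
      (X : Polynomial (Matrix (Fin p) (Fin p) ℝ)) * P n (α + 1)
        = P (n + 1) α + C (H n (α + 1) * Ring.inverse (H n α)) * P n α := by
  intro n α
  set ω : Matrix (Fin p) (Fin p) ℝ := H n (α + 1) * Ring.inverse (H n α) with hω
  set D : Polynomial (Matrix (Fin p) (Fin p) ℝ) :=
    X * P n (α + 1) - (P (n + 1) α + C ω * P n α) with hD
  have hdegP : ∀ m β : ℕ, (P m β).natDegree ≤ m := fun m β =>
    Polynomial.natDegree_le_iff_coeff_eq_zero.2 (hPmonic m β).2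
  -- high coefficients of D vanish
  have hcoeffD : ∀ k : ℕ, n < k → D.coeff k = 0 := by
    intro k hk
    obtain ⟨m, rfl⟩ : ∃ m, k = m + 1 := ⟨k - 1, by omega⟩
    have hm : n ≤ m := by omega
    simp only [hD, Polynomial.coeff_sub, Polynomial.coeff_add, Polynomial.coeff_C_mul,
      Polynomial.coeff_X_mul]
    rcases eq_or_lt_of_le hm with rfl | h
    · rw [(hPmonic n (α + 1)).1, (hPmonic (n + 1) α).1, (hPmonic n α).2 (n + 1) (Nat.lt_succ_self _)]
      simp
    · rw [(hPmonic n (α + 1)).2 m h, (hPmonic (n + 1) α).2 (m + 1) (by omega),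
        (hPmonic n α).2 (m + 1) (by omega)]
      simp
  have hdegD : D.natDegree ≤ n := Polynomial.natDegree_le_iff_coeff_eq_zero.2 hcoeffD
  -- orthogonality of D
  have horth : ∀ i : ℕ, i ≤ n → bform θ W α D (X ^ i) = 0 := by
    intro i hi
    have hdeg1 : (X * P n (α + 1)).natDegree < n + 2 := by
      refine lt_of_le_of_lt (Polynomial.natDegree_mul_le.trans
        (add_le_add (Polynomial.natDegree_X_le) (hdegP n (α + 1)))) ?_
      omega
    have hdeg2 : (P (n + 1) α).natDegree < n + 2 := Nat.lt_succ_of_le (hdegP (n + 1) α)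
    have hdeg3 : (P n α).natDegree < n + 2 := by have := hdegP n α; omega
    have hdegDN : D.natDegree < n + 2 := by omega
    have expand : bform θ W α D (X ^ i)
        = bform θ W α (X * P n (α + 1)) (X ^ i) - (bform θ W α (P (n + 1) α) (X ^ i)
          + ω * bform θ W α (P n α) (X ^ i)) := by
      rw [bform_Xpow θ W hWint α i D (n + 2) hdegDN,
        bform_Xpow θ W hWint α i _ (n + 2) hdeg1,
        bform_Xpow θ W hWint α i _ (n + 2) hdeg2,
        bform_Xpow θ W hWint α i _ (n + 2) hdeg3,
        Finset.mul_sum, ← Finset.sum_add_distrib, ← Finset.sum_sub_distrib]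
      refine Finset.sum_congr rfl fun k _ => ?_
      simp only [hD, Polynomial.coeff_sub, Polynomial.coeff_add, Polynomial.coeff_C_mul]
      rw [sub_mul, add_mul, mul_assoc]
    rw [expand, bform_X_mul θ W hWint]
    rcases lt_or_eq_of_le hi with h | h
    · rw [hPorth n (α + 1) i h, hPorth (n + 1) α i (by omega), hPorth n α i h]
      simp
    · subst h
      rw [← hHdef i (α + 1), hPorth (i + 1) α i (by omega), ← hHdef i α, hω,
        mul_assoc, Ring.inverse_mul_cancel _ (hHunit i α), mul_one]
      simp
  -- D = 0 via invertibility of the moment matrix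
  have hDzero : D = 0 := by
    set v : Fin (n + 1) → Matrix (Fin p) (Fin p) ℝ := fun k => D.coeff k with hv
    have hvM : v ᵥ* momMat θ W (n + 1) α = 0 := by
      funext j
      have := horth j (Nat.lt_succ_iff.mp j.isLt)
      rw [bform_Xpow θ W hWint α j D (n + 1) (Nat.lt_succ_of_le hdegD),
        Finset.sum_range] at this
      simpa [Matrix.vecMul, dotProduct, momMat, hv] using this
    have hv0 : v = 0 := by
      obtain ⟨u, hu⟩ := hM (n + 1) α (by omega)
      have h1 : momMat θ W (n + 1) α * u.inv = 1 := by rw [← hu]; exact u.mul_inv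
      have h2 := congrArg (fun A => v ᵥ* A) h1
      simp only [← Matrix.vecMul_vecMul, hvM, Matrix.zero_vecMul, Matrix.vecMul_one] at h2
      exact h2.symm
    ext k : 1
    rcases le_or_gt k n with h | h
    · have := congrFun hv0 ⟨k, by omega⟩
      simpa [hv] using this
    · simp [hcoeffD k h]
  exact sub_eq_zero.mp hDzero
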